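/- Let $c > 0$, $\theta > 0$, $\beta > 0$ be reals such that $1 + \theta - \beta > c\, e^{(1-c)/c}$. Then the function $f(t) := \frac{\log(t + 1 + \theta)}{(t+\beta)^c}$ is monotonically decreasing on $[0, +\infty)$. -/

import Mathlib

open Real Set

/-- Key inequality: for `x > 0`, `x - d ≤ c * (x * log x)` when `d > c * exp ((1-c)/c)`. -/
lemma key_ineq (c d x : ℝ) (hc : 0 < c) (hx : 0 < x)
    (hd : c * Real.exp ((1 - c) / c) < d) :
    x - d ≤ c * (x * Real.log x) := by
  set x0 : ℝ := Real.exp ((1 - c) / c) with hx0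
  have hx0pos : 0 < x0 := Real.exp_pos _
  have h1 : Real.log (x0 / x) ≤ x0 / x - 1 :=
    Real.log_le_sub_one_of_pos (div_pos hx0pos hx)
  rw [Real.log_div (ne_of_gt hx0pos) (ne_of_gt hx), hx0, Real.log_exp] at h1
  -- h1 : (1-c)/c - log x ≤ x0/x - 1
  have hlog : (1 - c) / c + 1 - x0 / x ≤ Real.log x := by linarith
  have h2 : x * ((1 - c) / c + 1 - x0 / x) ≤ x * Real.log x :=
    mul_le_mul_of_nonneg_left hlog (le_of_lt hx)
  have h3 : x * ((1 - c) / c + 1 - x0 / x) = x * ((1 - c) / c + 1) - x0 := by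
    field_simp
  rw [h3] at h2
  have h4 : c * (x * ((1 - c) / c + 1) - x0) ≤ c * (x * Real.log x) :=
    mul_le_mul_of_nonneg_left h2 (le_of_lt hc)
  have h5 : c * (x * ((1 - c) / c + 1) - x0) = x - c * x0 := by
    field_simp
    ring
  rw [h5] at h4
  linarith

theorem stmt3 (c θ β : ℝ) (hc : 0 < c) (hθ : 0 < θ) (hβ : 0 < β)
    (h : c * Real.exp ((1 - c) / c) < 1 + θ - β) :
    ∀ s t : ℝ, 0 ≤ s → s ≤ t →
      Real.log (t + 1 + θ) / (t + β) ^ c ≤ Real.log (s + 1 + θ) / (s + β) ^ c := by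
  set f : ℝ → ℝ := fun t => Real.log (t + 1 + θ) / (t + β) ^ c with hf
  have hderiv : ∀ t : ℝ, 0 ≤ t → HasDerivAt f
      ((1 / (t + 1 + θ) * (t + β) ^ c -
        Real.log (t + 1 + θ) * (c * (t + β) ^ (c - 1) * 1)) / ((t + β) ^ c) ^ 2) t := by
    intro t ht
    have hx : (0:ℝ) < t + 1 + θ := by linarith
    have ha : (0:ℝ) < t + β := by linarith
    have h1 : HasDerivAt (fun t : ℝ => Real.log (t + 1 + θ)) (1 / (t + 1 + θ)) t := by
      have := (((hasDerivAt_id t).add_const 1).add_const θ).log (ne_of_gt hx)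
      simpa using this
    have h2 : HasDerivAt (fun t : ℝ => (t + β) ^ c) (c * (t + β) ^ (c - 1) * 1) t := by
      exact (Real.hasDerivAt_rpow_const (Or.inl (ne_of_gt ha))).comp t
        ((hasDerivAt_id t).add_const β)
    exact h1.div h2 (by positivity)
  have hanti : AntitoneOn f (Ici (0:ℝ)) := by
    apply antitoneOn_of_deriv_nonpos (convex_Ici 0)
    · intro t ht
      exact (hderiv t ht).continuousAt.continuousWithinAt
    · intro t ht
      rw [interior_Ici] at ht
      exact (hderiv t (le_of_lt ht)).differentiableAt.differentiableWithinAt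
    · intro t ht
      rw [interior_Ici] at ht
      rw [(hderiv t (le_of_lt ht)).deriv]
      have hx : (0:ℝ) < t + 1 + θ := by linarith [(mem_Ioi.mp ht).le]
      have ha : (0:ℝ) < t + β := by linarith [(mem_Ioi.mp ht).le]
      apply div_nonpos_of_nonpos_of_nonneg _ (by positivity)
      have hkey : (t + β) ≤ c * ((t + 1 + θ) * Real.log (t + 1 + θ)) := by
        have := key_ineq c (1 + θ - β) (t + 1 + θ) hc hx h
        linarith
      have hsplit : (t + β) ^ c = (t + β) ^ (c - 1) * (t + β) := by
        rw [← Real.rpow_add_one (ne_of_gt ha) (c - 1)]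
        ring_nf
      have hpow : (0:ℝ) < (t + β) ^ (c - 1) := Real.rpow_pos_of_pos ha _
      rw [hsplit]
      rw [sub_nonpos]
      rw [div_mul_eq_mul_div, div_le_iff₀ hx] at *
      calc 1 * ((t + β) ^ (c - 1) * (t + β)) = (t + β) ^ (c - 1) * (t + β) := by ring
        _ ≤ (t + β) ^ (c - 1) * (c * ((t + 1 + θ) * Real.log (t + 1 + θ))) :=
            mul_le_mul_of_nonneg_left hkey hpow.le
        _ = Real.log (t + 1 + θ) * (c * (t + β) ^ (c - 1) * 1) * (t + 1 + θ) := by ring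
  intro s t hs hst
  exact hanti (mem_Ici.mpr hs) (mem_Ici.mpr (hs.trans hst)) hst
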